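/- arXiv:1804.08791 — 4 statements merged into one kernel-verified Lean document; each statement's English description precedes it below -/
import Mathlib

section
/- For every ε > 0 there exists an instance of splittable Capacitated Vehicle Routing on a tree with LB > 0 such that every feasible solution has cost at least (4/3 − ε)·LB; that is, the ratio OPT/LB can be made arbitrarily close to 4/3. -/
open scoped Classical

/-- An instance of splittable Capacitated Vehicle Routing on a (finite) tree.
The tree is rooted at the depot `root` and represented by a parent function:
every vertex reaches the root by iterating `parent`.  For `v ≠ root`, `len v`
is the length of the edge from `parent v` to `v`. -/
structure TreeCVRP (V : Type) [Fintype V] where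
  root : V
  parent : V → V
  parent_root : parent root = root
  reaches_root : ∀ v : V, ∃ n : ℕ, parent^[n] v = root
  len : V → ℝ
  len_nonneg : ∀ v, 0 ≤ len v
  demand : V → ℝ
  demand_nonneg : ∀ v, 0 ≤ demand v
  demand_root : demand root = 0
  cap : ℝ
  cap_pos : 0 < cap

namespace TreeCVRP

variable {V : Type} [Fintype V]

/-- `I.inSubtree w v` means that `v` lies in the subtree `T_w` rooted at `w`
(equivalently, `w` is an ancestor of `v`). -/
def inSubtree (I : TreeCVRP V) (w v : V) : Prop := ∃ n : ℕ, I.parent^[n] v = w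

/-- `d(T_w)`: the total demand of the subtree rooted at `w`. -/
noncomputable def subtreeDemand (I : TreeCVRP V) (w : V) : ℝ :=
  ∑ v ∈ Finset.univ.filter (fun v => I.inSubtree w v), I.demand v

/-- The traffic lower bound `LB = Σ_{e=(u,v)} 2·l(e)·⌈d(T_v)/Q⌉`, where the sum
is over edges, each identified with its lower endpoint `v ≠ root`. -/
noncomputable def lowerBound (I : TreeCVRP V) : ℝ :=
  ∑ v ∈ Finset.univ.filter (fun v => v ≠ I.root),
    2 * I.len v * (⌈I.subtreeDemand v / I.cap⌉ : ℝ)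

/-- A tour: a closed walk in the tree starting and ending at the depot, together
with an assignment of covered demand.  The walk is recorded by the number of
times `crossings v` it traverses the edge from `parent v` to `v` (in either
direction); a closed walk crosses each tree edge an even number of times, and the
set of crossed edges is connected to the root.  Demand may be covered only at
visited vertices, and a tour covers at most `Q` total demand. -/
structure Tour (I : TreeCVRP V) where
  crossings : V → ℕ
  crossings_root : crossings I.root = 0
  crossings_even : ∀ v, Even (crossings v)
  crossings_connected : ∀ v, 0 < crossings v →
    I.parent v = I.root ∨ 0 < crossings (I.parent v)
  cover : V → ℝ
  cover_nonneg : ∀ v, 0 ≤ cover v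
  cover_visited : ∀ v, 0 < cover v → v = I.root ∨ 0 < crossings v
  cover_le_cap : ∑ v, cover v ≤ I.cap

/-- The cost of a tour: lengths of traversed edges, counted with multiplicity. -/
noncomputable def Tour.cost {I : TreeCVRP V} (t : I.Tour) : ℝ :=
  ∑ v, (t.crossings v : ℝ) * I.len v

/-- A feasible solution: a finite collection of tours whose covered amounts at
each vertex sum to the demand at that vertex. -/
structure Solution (I : TreeCVRP V) where
  tours : List I.Tour
  covers_demand : ∀ v, (tours.map (fun t => t.cover v)).sum = I.demand v

/-- The total cost of a solution. -/
noncomputable def Solution.cost {I : TreeCVRP V} (s : I.Solution) : ℝ :=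
  (s.tours.map Tour.cost).sum

end TreeCVRP



open Finset


section Core
variable {ι : Type*} [Fintype ι] {β : Type*} [DecidableEq β]

lemma cvrpAux_sum_ite_two (P : ι → Prop) :
    ∑ i, (if P i then (2:ℕ) else 0) = 2 * (Finset.univ.filter P).card := by
  rw [Finset.sum_ite, Finset.sum_const, Finset.sum_const]
  simp [mul_comm]

lemma cvrpAux_chain_grow (c : ι → β → ℝ) (B : Finset β)
    (hconn : ∀ S : Finset β, S ⊆ B → S.Nonempty → S ≠ B →
      ∃ i, (∃ v ∈ S, 0 < c i v) ∧ (∃ v ∈ B \ S, 0 < c i v)) :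
    ∀ (k : ℕ) (S : Finset β), S ⊆ B → S.Nonempty → (B \ S).card = k →
      (Finset.univ.filter (fun i => ∃ v ∈ S, 0 < c i v)).card + S.card ≤
        1 + ∑ i, (S.filter (fun v => 0 < c i v)).card →
      (Finset.univ.filter (fun i => ∃ v ∈ B, 0 < c i v)).card + B.card ≤
        1 + ∑ i, (B.filter (fun v => 0 < c i v)).card := by
  intro k
  induction k using Nat.strong_induction_on with
  | _ k ih =>
    intro S hSB hSne hk hP
    by_cases hEq : S = B
    · subst hEq; exact hP
    · obtain ⟨i₀, ⟨v₁, hv₁, hc₁⟩, ⟨v₀, hv₀, hc₀⟩⟩ := hconn S hSB hSne hEq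
      have hv₀B : v₀ ∈ B := (Finset.mem_sdiff.mp hv₀).1
      have hv₀S : v₀ ∉ S := (Finset.mem_sdiff.mp hv₀).2
      set S' := insert v₀ S with hS'
      -- cards
      have hS'B : S' ⊆ B := Finset.insert_subset hv₀B hSB
      have hcardS' : S'.card = S.card + 1 := Finset.card_insert_of_notMem hv₀S
      -- measure decreases
      have hsd : B \ S' = (B \ S).erase v₀ := by
        ext x; simp [hS', Finset.mem_sdiff, Finset.mem_erase]; tauto
      have hmes : (B \ S').card < k := by
        rw [hsd]
        have : v₀ ∈ B \ S := hv₀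
        calc ((B \ S).erase v₀).card < (B \ S).card := Finset.card_erase_lt_of_mem this
        _ = k := hk
      -- E S' = E S + M
      have hE : ∑ i, (S'.filter (fun v => 0 < c i v)).card
          = (∑ i, (S.filter (fun v => 0 < c i v)).card)
            + (Finset.univ.filter (fun i => 0 < c i v₀)).card := by
        rw [Finset.card_filter (fun i => 0 < c i v₀), ← Finset.sum_add_distrib]
        refine Finset.sum_congr rfl (fun i _ => ?_)
        rw [hS', Finset.filter_insert]
        by_cases h : 0 < c i v₀
        · rw [if_pos h, if_pos h, Finset.card_insert_of_notMem (fun hmem => hv₀S (Finset.mem_of_mem_filter _ hmem))]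
        · rw [if_neg h, if_neg h, add_zero]
      -- T' S' ≤ T' S + New
      have hT'sub : Finset.univ.filter (fun i => ∃ v ∈ S', 0 < c i v)
          ⊆ (Finset.univ.filter (fun i => ∃ v ∈ S, 0 < c i v))
            ∪ ((Finset.univ.filter (fun i => 0 < c i v₀)) \ (Finset.univ.filter (fun i => ∃ v ∈ S, 0 < c i v))) := by
        intro i hi
        rw [Finset.mem_filter] at hi
        obtain ⟨-, v, hv, hcv⟩ := hi
        rw [hS', Finset.mem_insert] at hv
        by_cases hiS : ∃ v ∈ S, 0 < c i v
        · exact Finset.mem_union_left _ (Finset.mem_filter.mpr ⟨Finset.mem_univ _, hiS⟩)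
        · refine Finset.mem_union_right _ (Finset.mem_sdiff.mpr ⟨Finset.mem_filter.mpr ⟨Finset.mem_univ _, ?_⟩, fun h => hiS (Finset.mem_filter.mp h).2⟩)
          rcases hv with rfl | hv
          · exact hcv
          · exact absurd ⟨v, hv, hcv⟩ hiS
      have hi₀T : i₀ ∈ Finset.univ.filter (fun i => ∃ v ∈ S, 0 < c i v) :=
        Finset.mem_filter.mpr ⟨Finset.mem_univ _, v₁, hv₁, hc₁⟩
      have hi₀M : i₀ ∈ Finset.univ.filter (fun i => 0 < c i v₀) :=
        Finset.mem_filter.mpr ⟨Finset.mem_univ _, hc₀⟩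
      have hNewcard : ((Finset.univ.filter (fun i => 0 < c i v₀)) \ (Finset.univ.filter (fun i => ∃ v ∈ S, 0 < c i v))).card + 1
          ≤ (Finset.univ.filter (fun i => 0 < c i v₀)).card := by
        have hss : ((Finset.univ.filter (fun i => 0 < c i v₀)) \ (Finset.univ.filter (fun i => ∃ v ∈ S, 0 < c i v)))
            ⊂ Finset.univ.filter (fun i => 0 < c i v₀) := by
          refine Finset.ssubset_iff_of_subset (Finset.sdiff_subset) |>.mpr ⟨i₀, hi₀M, ?_⟩
          simp [Finset.mem_sdiff, hi₀T]
        exact Nat.succ_le_of_lt (Finset.card_lt_card hss)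
      have hT'card : (Finset.univ.filter (fun i => ∃ v ∈ S', 0 < c i v)).card
          ≤ (Finset.univ.filter (fun i => ∃ v ∈ S, 0 < c i v)).card
            + ((Finset.univ.filter (fun i => 0 < c i v₀)) \ (Finset.univ.filter (fun i => ∃ v ∈ S, 0 < c i v))).card :=
        le_trans (Finset.card_le_card hT'sub) (Finset.card_union_le _ _)
      have hPS' : (Finset.univ.filter (fun i => ∃ v ∈ S', 0 < c i v)).card + S'.card ≤
          1 + ∑ i, (S'.filter (fun v => 0 < c i v)).card := by
        rw [hE, hcardS']
        omega
      exact ih _ hmes S' hS'B ⟨v₀, Finset.mem_insert_self _ _⟩ rfl hPS'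

end Core

section Core2
variable {ι : Type*} [Fintype ι] {β : Type*} [DecidableEq β]

/-- connected case conclusion of chain_grow, packaged -/
lemma cvrpAux_chain (c : ι → β → ℝ) (B : Finset β) (hBne : B.Nonempty)
    (hconn : ∀ S : Finset β, S ⊆ B → S.Nonempty → S ≠ B →
      ∃ i, (∃ v ∈ S, 0 < c i v) ∧ (∃ v ∈ B \ S, 0 < c i v)) :
    (Finset.univ.filter (fun i => ∃ v ∈ B, 0 < c i v)).card + B.card ≤
      1 + ∑ i, (B.filter (fun v => 0 < c i v)).card := by
  obtain ⟨v, hv⟩ := hBne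
  refine cvrpAux_chain_grow c B hconn (B \ {v}).card {v} (Finset.singleton_subset_iff.mpr hv)
    (Finset.singleton_nonempty v) rfl ?_
  -- base case: T'({v}).card + 1 ≤ 1 + M_v
  have h1 : Finset.univ.filter (fun i => ∃ u ∈ ({v} : Finset β), 0 < c i u)
      = Finset.univ.filter (fun i => 0 < c i v) := by
    refine Finset.filter_congr (fun i _ => ?_)
    simp
  have h2 : ∑ i, (({v} : Finset β).filter (fun u => 0 < c i u)).card
      = (Finset.univ.filter (fun i => 0 < c i v)).card := by
    rw [Finset.card_filter (fun i => 0 < c i v)]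
    refine Finset.sum_congr rfl (fun i _ => ?_)
    by_cases h : 0 < c i v
    · rw [if_pos h, Finset.filter_singleton, if_pos h, Finset.card_singleton]
    · rw [if_neg h, Finset.filter_singleton, if_neg h, Finset.card_empty]
  rw [h1, h2, Finset.card_singleton]
  omega

lemma cvrpAux_core (m : ℕ) (hm : 1 ≤ m) (c : ι → β → ℝ) (hc : ∀ i v, 0 ≤ c i v)
    (hcap : ∀ i (X : Finset β), ∑ v ∈ X, c i v ≤ 4*m) :
    ∀ (B : Finset β), (∀ v ∈ B, (2*(m:ℝ)+1) ≤ ∑ i, c i v) →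
      4 * B.card ≤ ∑ i, ((if ∃ v ∈ B, 0 < c i v then (2:ℕ) else 0)
        + 2 * (B.filter (fun v => 0 < c i v)).card) := by
  intro B
  induction B using Finset.strongInductionOn with
  | _ B IH =>
    intro hcov
    rcases Finset.eq_empty_or_nonempty B with rfl | hBne
    · simp
    by_cases hsep : ∃ S : Finset β, S ⊆ B ∧ S.Nonempty ∧ S ≠ B ∧
        ∀ i, ¬((∃ v ∈ S, 0 < c i v) ∧ (∃ v ∈ B \ S, 0 < c i v))
    · obtain ⟨S, hSB, hSne, hSneB, hsepS⟩ := hsep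
      have hunion : S ∪ (B \ S) = B := Finset.union_sdiff_of_subset hSB
      have hdisj : Disjoint S (B \ S) := Finset.disjoint_sdiff
      have hcards : S.card + (B \ S).card = B.card := by
        rw [← Finset.card_union_of_disjoint hdisj, hunion]
      have hSsub : S ⊂ B := Finset.ssubset_iff_subset_ne.mpr ⟨hSB, hSneB⟩
      have hDsub : B \ S ⊂ B := Finset.sdiff_ssubset hSB hSne
      have IH1 := IH S hSsub (fun v hv => hcov v (hSB hv))
      have IH2 := IH (B \ S) hDsub (fun v hv => hcov v (Finset.mem_sdiff.mp hv).1)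
      -- termwise split
      have hterm : ∀ i, ((if ∃ v ∈ B, 0 < c i v then (2:ℕ) else 0)
            + 2 * (B.filter (fun v => 0 < c i v)).card)
          = ((if ∃ v ∈ S, 0 < c i v then (2:ℕ) else 0)
            + 2 * (S.filter (fun v => 0 < c i v)).card)
          + ((if ∃ v ∈ B \ S, 0 < c i v then (2:ℕ) else 0)
            + 2 * ((B \ S).filter (fun v => 0 < c i v)).card) := by
        intro i
        have hfilt : (B.filter (fun v => 0 < c i v)).card
            = (S.filter (fun v => 0 < c i v)).card + ((B \ S).filter (fun v => 0 < c i v)).card := by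
          have hdisj2 : Disjoint (S.filter (fun v => 0 < c i v)) ((B \ S).filter (fun v => 0 < c i v)) :=
            Finset.disjoint_filter_filter hdisj
          have hfu : B.filter (fun v => 0 < c i v)
              = (S.filter (fun v => 0 < c i v)) ∪ ((B \ S).filter (fun v => 0 < c i v)) := by
            rw [← Finset.filter_union, hunion]
          rw [hfu, Finset.card_union_of_disjoint hdisj2]
        have hind : (if ∃ v ∈ B, 0 < c i v then (2:ℕ) else 0)
            = (if ∃ v ∈ S, 0 < c i v then (2:ℕ) else 0)
              + (if ∃ v ∈ B \ S, 0 < c i v then (2:ℕ) else 0) := by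
          by_cases h1 : ∃ v ∈ S, 0 < c i v
          · have h2 : ¬ ∃ v ∈ B \ S, 0 < c i v := fun h2 => hsepS i ⟨h1, h2⟩
            obtain ⟨v, hv, hcv⟩ := h1
            rw [if_pos ⟨v, hSB hv, hcv⟩, if_pos ⟨v, hv, hcv⟩, if_neg h2]
          · by_cases h2 : ∃ v ∈ B \ S, 0 < c i v
            · obtain ⟨v, hv, hcv⟩ := h2
              rw [if_pos ⟨v, (Finset.mem_sdiff.mp hv).1, hcv⟩, if_neg h1, if_pos ⟨v, hv, hcv⟩]
            · have h3 : ¬ ∃ v ∈ B, 0 < c i v := by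
                rintro ⟨v, hv, hcv⟩
                by_cases hvS : v ∈ S
                · exact h1 ⟨v, hvS, hcv⟩
                · exact h2 ⟨v, Finset.mem_sdiff.mpr ⟨hv, hvS⟩, hcv⟩
              rw [if_neg h3, if_neg h1, if_neg h2]
        omega
      calc 4 * B.card = 4 * S.card + 4 * (B \ S).card := by omega
      _ ≤ _ := by
        rw [Finset.sum_congr rfl (fun i _ => hterm i), Finset.sum_add_distrib]
        omega
    · -- connected case
      push_neg at hsep
      have hconn : ∀ S : Finset β, S ⊆ B → S.Nonempty → S ≠ B →
          ∃ i, (∃ v ∈ S, 0 < c i v) ∧ (∃ v ∈ B \ S, 0 < c i v) := by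
        intro S h1 h2 h3
        exact hsep S h1 h2 h3
      have hchain := cvrpAux_chain c B hBne hconn
      -- capacity count: B.card + 1 ≤ 2 * T'.card
      set T' := Finset.univ.filter (fun i => ∃ v ∈ B, 0 < c i v) with hT'
      have hcount : B.card + 1 ≤ 2 * T'.card := by
        have h1 : (2*(m:ℝ)+1) * B.card ≤ ∑ v ∈ B, ∑ i, c i v := by
          rw [mul_comm]
          calc (B.card : ℝ) * (2*(m:ℝ)+1) = ∑ _v ∈ B, (2*(m:ℝ)+1) := by
                rw [Finset.sum_const, nsmul_eq_mul]
          _ ≤ _ := Finset.sum_le_sum hcov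
        rw [Finset.sum_comm] at h1
        have h2 : ∑ i, ∑ v ∈ B, c i v ≤ 4*(m:ℝ) * T'.card := by
          rw [← Finset.sum_filter_add_sum_filter_not Finset.univ (fun i => ∃ v ∈ B, 0 < c i v) (fun i => ∑ v ∈ B, c i v)]
          have hz : ∑ i ∈ Finset.univ.filter (fun i => ¬ ∃ v ∈ B, 0 < c i v), ∑ v ∈ B, c i v = 0 := by
            refine Finset.sum_eq_zero (fun i hi => Finset.sum_eq_zero (fun v hv => ?_))
            rw [Finset.mem_filter] at hi
            have := hi.2
            push_neg at this
            exact le_antisymm (this v hv) (hc i v)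
          rw [hz, add_zero]
          calc ∑ i ∈ T', ∑ v ∈ B, c i v ≤ ∑ _i ∈ T', 4*(m:ℝ) := Finset.sum_le_sum (fun i _ => hcap i B)
          _ = T'.card * (4*(m:ℝ)) := by rw [Finset.sum_const, nsmul_eq_mul]
          _ = 4*(m:ℝ) * T'.card := by ring
        have h3 : (2*(m:ℝ)+1) * B.card ≤ 4*(m:ℝ) * T'.card := le_trans h1 h2
        by_contra hcon
        push_neg at hcon
        have hBc : 1 ≤ B.card := Finset.card_pos.mpr hBne
        have h2T : 2 * T'.card ≤ B.card := by omega
        have : (2:ℝ) * T'.card ≤ (B.card : ℝ) := by exact_mod_cast h2T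
        have hm' : (1:ℝ) ≤ m := by exact_mod_cast hm
        have hBc' : (1:ℝ) ≤ B.card := by exact_mod_cast hBc
        nlinarith
      -- assemble
      rw [Finset.sum_add_distrib]
      have hsumite : (∑ x : ι, if ∃ v ∈ B, 0 < c x v then (2:ℕ) else 0) = 2 * T'.card := by
        rw [Finset.sum_ite, Finset.sum_const, Finset.sum_const, hT']
        simp [mul_comm]
      rw [hsumite]
      have hE : T'.card + B.card ≤ 1 + ∑ i, (B.filter (fun v => 0 < c i v)).card := hchain
      have : ∑ i, 2 * (B.filter (fun v => 0 < c i v)).card = 2 * ∑ i, (B.filter (fun v => 0 < c i v)).card := by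
        rw [Finset.mul_sum]
      omega


end Core2


noncomputable def cvrpBad (m : ℕ) (hm : 1 ≤ m) : TreeCVRP (Fin (2*m+2)) where
  root := ⟨0, by omega⟩
  parent := fun v => if v.val ≤ 1 then ⟨0, by omega⟩ else ⟨1, by omega⟩
  parent_root := by simp
  reaches_root := by
    intro v
    refine ⟨2, ?_⟩
    show (fun v : Fin (2*m+2) => if v.val ≤ 1 then (⟨0, by omega⟩ : Fin (2*m+2)) else ⟨1, by omega⟩)^[2] v = _
    simp only [Function.iterate_succ, Function.iterate_zero, Function.comp_apply, id_eq]
    by_cases h : v.val ≤ 1 <;> simp [h]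
  len := fun _ => 1
  len_nonneg := fun _ => zero_le_one
  demand := fun v => if 2 ≤ v.val then 2*(m:ℝ)+1 else 0
  demand_nonneg := by intro v; split <;> positivity
  demand_root := by norm_num
  cap := 4*(m:ℝ)
  cap_pos := by positivity

namespace TreeCVRP

variable (m : ℕ) (hm : 1 ≤ m)

lemma cvrpBad_root : (cvrpBad m hm).root = ⟨0, by omega⟩ := rfl
lemma cvrpBad_parent (v) : (cvrpBad m hm).parent v = if v.val ≤ 1 then ⟨0, by omega⟩ else ⟨1, by omega⟩ := rfl

lemma cvrpBad_iter2 (v) : ((cvrpBad m hm).parent)^[2] v = (cvrpBad m hm).root := by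
  simp only [Function.iterate_succ, Function.iterate_zero, Function.comp_apply, id_eq,
    cvrpBad_parent, cvrpBad_root]
  by_cases h : v.val ≤ 1 <;> simp [h]

lemma cvrpBad_iter_ge2 (k v) (hk : 2 ≤ k) : ((cvrpBad m hm).parent)^[k] v = (cvrpBad m hm).root := by
  obtain ⟨j, rfl⟩ : ∃ j, k = j + 2 := ⟨k - 2, by omega⟩
  rw [Function.iterate_add_apply, cvrpBad_iter2]
  exact Function.iterate_fixed (cvrpBad m hm).parent_root j

lemma cvrpBad_inSubtree_hub (v) :
    (cvrpBad m hm).inSubtree ⟨1, by omega⟩ v ↔ v ≠ (cvrpBad m hm).root := by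
  constructor
  · rintro ⟨k, hk⟩ rfl
    match k with
    | 0 => exact absurd hk (by simp [cvrpBad_root, Fin.ext_iff])
    | 1 =>
      rw [Function.iterate_one, cvrpBad_parent] at hk
      have hval := congrArg Fin.val hk
      have h0 : ((cvrpBad m hm).root).val = 0 := rfl
      by_cases h : ((cvrpBad m hm).root).val ≤ 1
      · rw [if_pos h] at hval; simp at hval
      · omega
    | (j+2) =>
      rw [cvrpBad_iter_ge2 m hm _ _ (by omega)] at hk
      exact absurd hk (by simp [cvrpBad_root, Fin.ext_iff])
  · intro hv
    by_cases h1 : v.val ≤ 1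
    · have : v = ⟨1, by omega⟩ := by
        have : v.val ≠ 0 := fun h => hv (Fin.ext (show v.val = 0 from h))
        exact Fin.ext (show v.val = 1 by omega)
      exact ⟨0, by simp [this]⟩
    · exact ⟨1, by rw [Function.iterate_one, cvrpBad_parent]; simp [h1]⟩

lemma cvrpBad_inSubtree_leaf (w v) (hw : 2 ≤ w.val) :
    (cvrpBad m hm).inSubtree w v ↔ v = w := by
  constructor
  · rintro ⟨k, hk⟩
    match k with
    | 0 => exact hk
    | 1 =>
      rw [Function.iterate_one, cvrpBad_parent] at hk
      have hval := congrArg Fin.val hk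
      by_cases h : v.val ≤ 1
      · rw [if_pos h] at hval; simp at hval; omega
      · rw [if_neg h] at hval; simp at hval; omega
    | (j+2) =>
      rw [cvrpBad_iter_ge2 m hm _ _ (by omega)] at hk
      have hval := congrArg Fin.val hk
      have h0 : ((cvrpBad m hm).root).val = 0 := rfl
      omega
  · rintro rfl; exact ⟨0, rfl⟩

lemma cvrpBad_leaves_card :
    (Finset.univ.filter (fun v : Fin (2*m+2) => 2 ≤ v.val)).card = 2*m := by
  have h := Finset.card_filter_add_card_filter_not
    (s := (Finset.univ : Finset (Fin (2*m+2)))) (p := fun v => 2 ≤ v.val)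
  have hneg : Finset.univ.filter (fun v : Fin (2*m+2) => ¬ 2 ≤ v.val)
      = {⟨0, by omega⟩, ⟨1, by omega⟩} := by
    ext v
    simp only [Finset.mem_filter, Finset.mem_univ, true_and, Finset.mem_insert,
      Finset.mem_singleton, Fin.ext_iff, Fin.val_mk]
    omega
  rw [hneg] at h
  have hcard2 : ({⟨0, by omega⟩, ⟨1, by omega⟩} : Finset (Fin (2*m+2))).card = 2 := by
    rw [Finset.card_insert_of_notMem (by simp [Fin.ext_iff]), Finset.card_singleton]
  rw [hcard2] at h
  simp [Fintype.card_fin] at h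
  omega

lemma cvrpBad_subtreeDemand_hub :
    (cvrpBad m hm).subtreeDemand ⟨1, by omega⟩ = (2*m) * (2*(m:ℝ)+1) := by
  unfold subtreeDemand
  have hfe : Finset.univ.filter (fun v => (cvrpBad m hm).inSubtree ⟨1, by omega⟩ v)
      = Finset.univ.filter (fun v : Fin (2*m+2) => v ≠ (cvrpBad m hm).root) :=
    Finset.filter_congr (fun v _ => by rw [cvrpBad_inSubtree_hub])
  rw [hfe]
  have : ∀ v : Fin (2*m+2), (cvrpBad m hm).demand v = if 2 ≤ v.val then 2*(m:ℝ)+1 else 0 := fun v => rfl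
  rw [Finset.sum_congr rfl (fun v _ => this v)]
  rw [Finset.sum_ite, Finset.sum_const, Finset.sum_const, smul_zero, add_zero]
  have hff : (Finset.univ.filter (fun v : Fin (2*m+2) => v ≠ (cvrpBad m hm).root)).filter (fun v => 2 ≤ v.val)
      = Finset.univ.filter (fun v : Fin (2*m+2) => 2 ≤ v.val) := by
    rw [Finset.filter_filter]
    refine Finset.filter_congr (fun v _ => ?_)
    have h0 : ((cvrpBad m hm).root).val = 0 := rfl
    constructor
    · exact fun h => h.2
    · intro h
      refine ⟨fun he => ?_, h⟩
      rw [he] at h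
      omega
  rw [hff, cvrpBad_leaves_card, nsmul_eq_mul]
  push_cast
  ring

lemma cvrpBad_subtreeDemand_leaf (w : Fin (2*m+2)) (hw : 2 ≤ w.val) :
    (cvrpBad m hm).subtreeDemand w = 2*(m:ℝ)+1 := by
  unfold subtreeDemand
  have hfe : Finset.univ.filter (fun v => (cvrpBad m hm).inSubtree w v) = {w} := by
    ext v
    simp [cvrpBad_inSubtree_leaf m hm w v hw]
  rw [hfe, Finset.sum_singleton]
  show (if 2 ≤ w.val then 2*(m:ℝ)+1 else 0) = _
  rw [if_pos hw]

lemma cvrpBad_lowerBound : (cvrpBad m hm).lowerBound = 6*(m:ℝ)+2 := by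
  have hm' : (1:ℝ) ≤ m := by exact_mod_cast hm
  have hcapv : (cvrpBad m hm).cap = 4*(m:ℝ) := rfl
  have hceil1 : (⌈(cvrpBad m hm).subtreeDemand ⟨1, by omega⟩ / (cvrpBad m hm).cap⌉ : ℤ) = m + 1 := by
    rw [cvrpBad_subtreeDemand_hub, hcapv]
    have hq : ((2*m) * (2*(m:ℝ)+1)) / (4*(m:ℝ)) = ((2*m:ℝ)+1)/2 := by
      rw [div_eq_div_iff (by positivity) (by norm_num)]
      ring
    rw [hq, Int.ceil_eq_iff]
    push_cast
    constructor <;> linarith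
  have hceilleaf : ∀ w : Fin (2*m+2), 2 ≤ w.val →
      (⌈(cvrpBad m hm).subtreeDemand w / (cvrpBad m hm).cap⌉ : ℤ) = 1 := by
    intro w hw
    rw [cvrpBad_subtreeDemand_leaf m hm w hw, hcapv, Int.ceil_eq_iff]
    constructor
    · push_cast
      have hpos : (0:ℝ) < (2*(m:ℝ)+1) / (4*(m:ℝ)) := by positivity
      linarith
    · push_cast
      rw [div_le_one (by positivity)]
      linarith
  unfold lowerBound
  rw [Finset.sum_filter]
  have hpt : ∀ (v : Fin (2*m+2)) (inst : Decidable (v ≠ (cvrpBad m hm).root)),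
      (@ite ℝ (v ≠ (cvrpBad m hm).root) inst
        (2 * (cvrpBad m hm).len v * (⌈(cvrpBad m hm).subtreeDemand v / (cvrpBad m hm).cap⌉ : ℝ))
        0)
      = (if 2 ≤ v.val then (2:ℝ) else 0) + (if v.val = 1 then 2*((m:ℝ)+1) else 0) := by
    intro v inst
    have hroot0 : ((cvrpBad m hm).root).val = 0 := rfl
    have hlenv : (cvrpBad m hm).len v = 1 := rfl
    rcases Nat.lt_or_ge v.val 2 with hlt | hge
    · rcases Nat.lt_or_ge v.val 1 with hlt0 | hge1
      · -- v = root
        have hv : v = (cvrpBad m hm).root := Fin.ext (by omega)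
        revert inst
        rw [hv]
        intro inst
        rw [if_neg (by simp), if_neg (by omega), if_neg (by omega)]
        norm_num
      · -- v = hub
        have hv1 : v.val = 1 := by omega
        have hv : v = (⟨1, by omega⟩ : Fin (2*m+2)) := Fin.ext hv1
        revert inst
        rw [hv]
        intro inst
        rw [if_pos (by intro h; have := congrArg Fin.val h; simp [hroot0] at this),
          if_neg (by simp), if_pos (by simp)]
        show 2 * (cvrpBad m hm).len _ * _ = _
        rw [show (cvrpBad m hm).len ⟨1, by omega⟩ = 1 from rfl, hceil1]
        push_cast
        ring
    · -- leaf
      have hvroot : v ≠ (cvrpBad m hm).root := by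
        intro h
        rw [h] at hge
        omega
      rw [if_pos hvroot, if_pos hge, if_neg (by omega), add_zero,
        show (cvrpBad m hm).len v = 1 from rfl, hceilleaf v hge]
      norm_num
  refine Eq.trans (Finset.sum_congr rfl (fun v _ => hpt v _)) ?_
  rw [Finset.sum_add_distrib]
  have h1 : ∑ v : Fin (2*m+2), (if 2 ≤ v.val then (2:ℝ) else 0) = 2*(2*(m:ℝ)) := by
    rw [Finset.sum_ite, Finset.sum_const, Finset.sum_const, smul_zero, add_zero,
      cvrpBad_leaves_card m, nsmul_eq_mul]
    push_cast
    ring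
  have h2 : ∑ v : Fin (2*m+2), (if v.val = 1 then 2*((m:ℝ)+1) else 0) = 2*((m:ℝ)+1) := by
    have hfilt : Finset.univ.filter (fun v : Fin (2*m+2) => v.val = 1) = {⟨1, by omega⟩} := by
      ext v
      simp [Fin.ext_iff]
    rw [Finset.sum_ite, Finset.sum_const, Finset.sum_const, smul_zero, add_zero,
      hfilt, Finset.card_singleton, one_smul]
  rw [h1, h2]
  ring

end TreeCVRP

section Main
open Finset TreeCVRP

lemma cvrpAux_list_sum {α : Type*} (l : List α) (f : α → ℝ) :
    (l.map f).sum = ∑ i : Fin l.length, f (l.get i) := by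
  induction l with
  | nil => simp
  | cons a t ih =>
    rw [List.map_cons, List.sum_cons, ih]
    exact (Fin.sum_univ_succ (fun i : Fin ((a :: t).length) => f ((a :: t).get i))).symm

lemma cvrpAux_even_pos {k : ℕ} (he : Even k) (hp : 0 < k) : 2 ≤ k := by
  obtain ⟨r, rfl⟩ := he; omega

theorem cvrp_tree_lowerBound_ratio_tight' (ε : ℝ) (hε : 0 < ε) :
    ∃ (n : ℕ) (I : TreeCVRP (Fin n)), 0 < I.lowerBound ∧
      ∀ s : I.Solution, (4 / 3 - ε) * I.lowerBound ≤ s.cost := by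
  set m : ℕ := max 1 ⌈3/ε⌉₊ with hmdef
  have hm : 1 ≤ m := le_max_left _ _
  have hm3 : (3:ℝ) ≤ ε * m := by
    have h1 : (3/ε : ℝ) ≤ ⌈3/ε⌉₊ := Nat.le_ceil _
    have h2 : (⌈3/ε⌉₊ : ℝ) ≤ m := by exact_mod_cast Nat.le_max_right 1 ⌈3/ε⌉₊
    have h3 := le_trans h1 h2
    calc (3:ℝ) = ε * (3/ε) := by field_simp
    _ ≤ ε * m := by
      apply mul_le_mul_of_nonneg_left h3 (le_of_lt hε)
  refine ⟨2*m+2, cvrpBad m hm, ?_, ?_⟩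
  · rw [cvrpBad_lowerBound m hm]
    positivity
  intro s
  rw [cvrpBad_lowerBound m hm]
  set L := s.tours.length with hL
  set c : Fin L → Fin (2*m+2) → ℝ := fun i v => (s.tours.get i).cover v with hc
  set B : Finset (Fin (2*m+2)) := Finset.univ.filter (fun v => 2 ≤ v.val) with hB
  have hcnonneg : ∀ i v, 0 ≤ c i v := fun i v => (s.tours.get i).cover_nonneg v
  have hcap : ∀ (i : Fin L) (X : Finset (Fin (2*m+2))), ∑ v ∈ X, c i v ≤ 4*(m:ℝ) := by
    intro i X
    calc ∑ v ∈ X, c i v ≤ ∑ v : Fin (2*m+2), c i v :=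
          Finset.sum_le_sum_of_subset_of_nonneg (Finset.subset_univ X)
            (fun v _ _ => hcnonneg i v)
    _ ≤ (cvrpBad m hm).cap := (s.tours.get i).cover_le_cap
    _ = 4*(m:ℝ) := rfl
  have hcov : ∀ v ∈ B, (2*(m:ℝ)+1) ≤ ∑ i, c i v := by
    intro v hv
    rw [hB, Finset.mem_filter] at hv
    have hd := s.covers_demand v
    rw [cvrpAux_list_sum] at hd
    have hdv : (cvrpBad m hm).demand v = 2*(m:ℝ)+1 := by
      show (if 2 ≤ v.val then 2*(m:ℝ)+1 else 0) = _
      rw [if_pos hv.2]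
    rw [hdv] at hd
    exact le_of_eq hd.symm
  have hcore := cvrpAux_core m hm c hcnonneg hcap B hcov
  have hBcard : B.card = 2*m := by rw [hB]; exact cvrpBad_leaves_card m
  rw [hBcard] at hcore
  -- per-tour cost bound
  have htour : ∀ i : Fin L, (((if ∃ v ∈ B, 0 < c i v then (2:ℕ) else 0)
      + 2 * (B.filter (fun v => 0 < c i v)).card : ℕ) : ℝ) ≤ (s.tours.get i).cost := by
    intro i
    set t := s.tours.get i with ht
    have hcost : t.cost = ∑ v : Fin (2*m+2), (t.crossings v : ℝ) := by
      unfold Tour.cost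
      refine Finset.sum_congr rfl (fun v _ => ?_)
      have hl : (cvrpBad m hm).len v = 1 := rfl
      rw [hl, mul_one]
    by_cases hact : ∃ v ∈ B, 0 < c i v
    · rw [if_pos hact]
      set F := B.filter (fun v => 0 < c i v) with hF
      have hcross : ∀ v ∈ F, 2 ≤ t.crossings v := by
        intro v hv
        rw [hF, Finset.mem_filter, hB, Finset.mem_filter] at hv
        obtain ⟨⟨-, hv2⟩, hcv⟩ := hv
        have hvroot : v ≠ (cvrpBad m hm).root := by
          intro h
          rw [h] at hv2
          have h0 : ((cvrpBad m hm).root).val = 0 := rfl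
          omega
        rcases t.cover_visited v hcv with h | h
        · exact absurd h hvroot
        · exact cvrpAux_even_pos (t.crossings_even v) h
      have hhub : 2 ≤ t.crossings ⟨1, by omega⟩ := by
        obtain ⟨v, hvB, hcv⟩ := hact
        rw [hB, Finset.mem_filter] at hvB
        have hvroot : v ≠ (cvrpBad m hm).root := by
          intro h
          rw [h] at hvB
          have h0 : ((cvrpBad m hm).root).val = 0 := rfl
          omega
        rcases t.cover_visited v hcv with h | h
        · exact absurd h hvroot
        have h2 := t.crossings_connected v h
        have hpar : (cvrpBad m hm).parent v = ⟨1, by omega⟩ := by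
          show (if v.val ≤ 1 then _ else _) = _
          rw [if_neg (by omega : ¬ v.val ≤ 1)]
        rcases h2 with h3 | h3
        · rw [hpar] at h3
          have h0 : ((cvrpBad m hm).root).val = 0 := rfl
          have hval := congrArg Fin.val h3
          simp at hval
          omega
        · rw [hpar] at h3
          exact cvrpAux_even_pos (t.crossings_even _) h3
      have hhubF : (⟨1, by omega⟩ : Fin (2*m+2)) ∉ F := by
        rw [hF, Finset.mem_filter, hB, Finset.mem_filter]
        rintro ⟨⟨-, h⟩, -⟩
        simp at h
      calc (((2:ℕ) + 2 * F.card : ℕ) : ℝ)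
          = 2 + ∑ _v ∈ F, (2:ℝ) := by
            rw [Finset.sum_const, nsmul_eq_mul]; push_cast; ring
      _ ≤ (t.crossings ⟨1, by omega⟩ : ℝ) + ∑ v ∈ F, (t.crossings v : ℝ) := by
            refine add_le_add (by exact_mod_cast hhub) (Finset.sum_le_sum (fun v hv => ?_))
            exact_mod_cast hcross v hv
      _ = ∑ v ∈ insert (⟨1, by omega⟩ : Fin (2*m+2)) F, (t.crossings v : ℝ) := by
            rw [Finset.sum_insert hhubF]
      _ ≤ ∑ v : Fin (2*m+2), (t.crossings v : ℝ) :=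
            Finset.sum_le_sum_of_subset_of_nonneg (Finset.subset_univ _)
              (fun v _ _ => by positivity)
      _ = t.cost := hcost.symm
    · rw [if_neg hact]
      have hFe : B.filter (fun v => 0 < c i v) = ∅ := by
        rw [Finset.filter_eq_empty_iff]
        intro v hv hcv
        exact hact ⟨v, hv, hcv⟩
      rw [hFe]
      simp only [Finset.card_empty, mul_zero, add_zero, Nat.cast_zero]
      rw [hcost]
      positivity
  have hcost_sum : s.cost = ∑ i : Fin L, (s.tours.get i).cost := by
    unfold Solution.cost
    rw [cvrpAux_list_sum]
  have hsum : ((4 * (2*m) : ℕ) : ℝ) ≤ s.cost := by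
    rw [hcost_sum]
    calc ((4 * (2*m) : ℕ) : ℝ) ≤ ((∑ i : Fin L, ((if ∃ v ∈ B, 0 < c i v then (2:ℕ) else 0)
          + 2 * (B.filter (fun v => 0 < c i v)).card) : ℕ) : ℝ) := by exact_mod_cast hcore
    _ = ∑ i : Fin L, (((if ∃ v ∈ B, 0 < c i v then (2:ℕ) else 0)
          + 2 * (B.filter (fun v => 0 < c i v)).card : ℕ) : ℝ) := by push_cast; rfl
    _ ≤ ∑ i : Fin L, (s.tours.get i).cost := Finset.sum_le_sum (fun i _ => htour i)
  have h8m : (8*(m:ℝ)) ≤ s.cost := by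
    calc (8*(m:ℝ)) = ((4 * (2*m) : ℕ) : ℝ) := by push_cast; ring
    _ ≤ s.cost := hsum
  have hm' : (1:ℝ) ≤ m := by exact_mod_cast hm
  have hexp : (4/3 - ε) * (6*(m:ℝ)+2) = 8*(m:ℝ) + 8/3 - 6*(ε*(m:ℝ)) - 2*ε := by ring
  linarith [h8m, hm3, hε.le, hexp]

end Main

/-- For every `ε > 0` there is an instance of splittable
Capacitated Vehicle Routing on a tree with `LB > 0` such that every feasible
solution costs at least `(4/3 − ε)·LB`; i.e. the ratio `OPT/LB` can be made
arbitrarily close to `4/3`. -/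
theorem cvrp_tree_lowerBound_ratio_tight (ε : ℝ) (hε : 0 < ε) :
    ∃ (n : ℕ) (I : TreeCVRP (Fin n)), 0 < I.lowerBound ∧
      ∀ s : I.Solution, (4 / 3 - ε) * I.lowerBound ≤ s.cost :=
  cvrp_tree_lowerBound_ratio_tight' ε hε
end

section
/- Let p ≥ 2 be an integer and let x₁, …, x_p, and y₁, …, y_{p−1}, z₁, …, z_{p−1} be nonnegative real numbers satisfying: z₁ ≤ y₁ ≤ x₁, and for every i with 2 ≤ i ≤ p−1, z_i ≤ y_i and z_i ≤ Σ_{j=i+1}^{p} x_j. Then p·x_p + Σ_{i=1}^{p−1} (i·x_i + 2·z_i + y_i) ≤ (4/3)·( p·x_p + Σ_{i=1}^{p−1} (i·x_i + z_i + y_i) ). (This is the inequality showing that the cascade tour set resolves a long p-chain rooted at the depot: x_i is the length of stem edge e_i^0, y_i and z_i are the lengths of the level-i leaf edges e_i^1 and e_i^2 with y_i ≥ z_i; the 2-chain at the bottom satisfies x₁ ≥ y₁ ≥ z₁; the long condition gives z_i ≤ Σ_{j>i} x_j, the distance from the level-(i+1) chain vertex to the depot. The left side is half the cost of the p cascade tours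 and the right-hand bracket is half the reduction in the traffic lower bound.) -/
/-- The cascade inequality for a long p-chain at the depot:
`x i` is the length of stem edge `e_i^0`, `y i ≥ z i` are the lengths of the
level-`i` leaf edges; the bottom 2-chain satisfies `z 1 ≤ y 1 ≤ x 1` and the
long condition gives `z i ≤ Σ_{j=i+1}^{p} x j` for `2 ≤ i ≤ p−1`.  Then half
the cascade cost is at most `4/3` times half the lower-bound reduction. -/
theorem long_pchain_cascade_at_root
    (p : ℕ) (hp : 2 ≤ p) (x y z : ℕ → ℝ)
    (hx : ∀ i ∈ Finset.Icc 1 p, 0 ≤ x i)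
    (hy : ∀ i ∈ Finset.Icc 1 (p - 1), 0 ≤ y i)
    (hz : ∀ i ∈ Finset.Icc 1 (p - 1), 0 ≤ z i)
    (hzy1 : z 1 ≤ y 1) (hyx1 : y 1 ≤ x 1)
    (hlong : ∀ i, 2 ≤ i → i ≤ p - 1 →
      z i ≤ y i ∧ z i ≤ ∑ j ∈ Finset.Icc (i + 1) p, x j) :
    (p : ℝ) * x p + ∑ i ∈ Finset.Icc 1 (p - 1), ((i : ℝ) * x i + 2 * z i + y i) ≤
      4 / 3 *
        ((p : ℝ) * x p + ∑ i ∈ Finset.Icc 1 (p - 1), ((i : ℝ) * x i + z i + y i)) := by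
  obtain ⟨q, rfl⟩ : ∃ q, p = q + 2 := ⟨p - 2, by omega⟩
  have hq1 : q + 2 - 1 = q + 1 := by omega
  rw [hq1] at hy hz ⊢
  rw [hq1] at hlong
  -- split off the i = 1 term
  have hins : Finset.Icc 1 (q + 1) = insert 1 (Finset.Icc 2 (q + 1)) := by
    ext i; simp [Finset.mem_Icc]; omega
  have h1notin : (1 : ℕ) ∉ Finset.Icc 2 (q + 1) := by simp
  set S := ∑ i ∈ Finset.Icc 1 (q + 1), z i with hSdef
  have hSy : S ≤ ∑ i ∈ Finset.Icc 1 (q + 1), y i := by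
    apply Finset.sum_le_sum
    intro i hi
    rw [Finset.mem_Icc] at hi
    rcases eq_or_lt_of_le hi.1 with h | h
    · rw [← h]; exact hzy1
    · exact (hlong i h hi.2).1
  -- the double-sum bound
  have hzbound : ∑ i ∈ Finset.Icc 2 (q + 1), z i ≤
      ∑ i ∈ Finset.Icc 2 (q + 1), ∑ j ∈ Finset.Icc (i + 1) (q + 2), x j := by
    apply Finset.sum_le_sum
    intro i hi
    rw [Finset.mem_Icc] at hi
    exact (hlong i hi.1 hi.2).2
  have hswap : ∑ i ∈ Finset.Icc 2 (q + 1), ∑ j ∈ Finset.Icc (i + 1) (q + 2), x j =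
      ∑ j ∈ Finset.Icc 3 (q + 2), ∑ _i ∈ Finset.Icc 2 (j - 1), x j := by
    apply Finset.sum_comm'
    intro i j
    simp only [Finset.mem_Icc]
    omega
  have hcard : ∑ j ∈ Finset.Icc 3 (q + 2), ∑ _i ∈ Finset.Icc 2 (j - 1), x j =
      ∑ j ∈ Finset.Icc 3 (q + 2), ((j - 2 : ℕ) : ℝ) * x j := by
    apply Finset.sum_congr rfl
    intro j hj
    rw [Finset.mem_Icc] at hj
    rw [Finset.sum_const, Nat.card_Icc, nsmul_eq_mul,
      show j - 1 + 1 - 2 = j - 2 from by omega]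
  have hcoef : ∑ j ∈ Finset.Icc 3 (q + 2), ((j - 2 : ℕ) : ℝ) * x j ≤
      ∑ j ∈ Finset.Icc 3 (q + 2), (j : ℝ) * x j := by
    apply Finset.sum_le_sum
    intro j hj
    rw [Finset.mem_Icc] at hj
    have hxj : 0 ≤ x j := hx j (by rw [Finset.mem_Icc]; omega)
    have : ((j - 2 : ℕ) : ℝ) ≤ (j : ℝ) := by
      exact_mod_cast Nat.sub_le j 2
    nlinarith
  have hsubset : ∑ j ∈ Finset.Icc 3 (q + 2), (j : ℝ) * x j ≤
      ∑ j ∈ Finset.Icc 2 (q + 2), (j : ℝ) * x j := by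
    apply Finset.sum_le_sum_of_subset_of_nonneg
    · intro j hj; rw [Finset.mem_Icc] at *; omega
    · intro j hj _
      rw [Finset.mem_Icc] at hj
      have hxj : 0 ≤ x j := hx j (by rw [Finset.mem_Icc]; omega)
      positivity
  have htop : ∑ j ∈ Finset.Icc 2 (q + 2), (j : ℝ) * x j =
      ∑ j ∈ Finset.Icc 2 (q + 1), (j : ℝ) * x j + ((q + 2 : ℕ) : ℝ) * x (q + 2) := by
    exact Finset.sum_Icc_succ_top (by omega) _
  have hz1 : z 1 ≤ x 1 := hzy1.trans hyx1
  have hSx : S ≤ ((q + 2 : ℕ) : ℝ) * x (q + 2) + ∑ i ∈ Finset.Icc 1 (q + 1), (i : ℝ) * x i := by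
    have hS : S = z 1 + ∑ i ∈ Finset.Icc 2 (q + 1), z i := by
      rw [hSdef, hins, Finset.sum_insert h1notin]
    have hX : ∑ i ∈ Finset.Icc 1 (q + 1), (i : ℝ) * x i =
        (1 : ℝ) * x 1 + ∑ i ∈ Finset.Icc 2 (q + 1), (i : ℝ) * x i := by
      rw [hins, Finset.sum_insert h1notin]; norm_num
    rw [hS, hX]
    have := hzbound.trans (le_of_eq (hswap.trans hcard)) |>.trans
      (hcoef.trans (hsubset.trans (le_of_eq htop)))
    linarith
  -- assemble
  have hsum2 : ∑ i ∈ Finset.Icc 1 (q + 1), ((i : ℝ) * x i + 2 * z i + y i) =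
      ∑ i ∈ Finset.Icc 1 (q + 1), (i : ℝ) * x i + 2 * S +
        ∑ i ∈ Finset.Icc 1 (q + 1), y i := by
    rw [Finset.sum_add_distrib, Finset.sum_add_distrib, hSdef, Finset.mul_sum]
  have hsum1 : ∑ i ∈ Finset.Icc 1 (q + 1), ((i : ℝ) * x i + z i + y i) =
      ∑ i ∈ Finset.Icc 1 (q + 1), (i : ℝ) * x i + S +
        ∑ i ∈ Finset.Icc 1 (q + 1), y i := by
    rw [Finset.sum_add_distrib, Finset.sum_add_distrib, hSdef]
  rw [hsum1, hsum2]
  push_cast at hSx ⊢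
  linarith
end

section
/- Let p ≥ 2 and p′ ≥ 2 be integers, let a ≥ 0 be a real number, and let x₁,…,x_p, y₁,…,y_{p−1}, z₁,…,z_{p−1} and x′₁,…,x′_{p′}, y′₁,…,y′_{p′−1}, z′₁,…,z′_{p′−1} be nonnegative reals satisfying: z₁ ≤ y₁ ≤ x₁ and z′₁ ≤ y′₁ ≤ x′₁; for 2 ≤ i ≤ p−1, z_i ≤ y_i and z_i ≤ a + Σ_{j=i+1}^{p} x_j; and for 2 ≤ i ≤ p′−1, z′_i ≤ y′_i and z′_i ≤ a + Σ_{j=i+1}^{p′} x′_j. Then p·x_p + Σ_{i=1}^{p−1}(i·x_i + 2z_i + y_i) + p′·x′_{p′} + Σ_{i=1}^{p′−1}(i·x′_i + 2z′_i + y′_i) + (p+p′)·a ≤ (4/3)·( p·x_p + Σ_{i=1}^{p−1}(i·x_i + z_i + y_i) + p′·x′_{p′} + Σ_{i=1}^{p′−1}(i·x′_i + z′_i + y′_i) + (p+p′−1)·a ). (This is the inequality showing that two sibling long chains — a long p-chain and a long p′-chain hanging at a common vertex u at distance a from the depot — can be resolved together by their two cascades: the left side is half the cost of the p + p′ cascade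 tours, and the right-hand bracket is half the reduction in the traffic lower bound, using that the total demand of a p-chain exceeds p − 0.5 so covering both chains reduces traffic on the u-to-depot path by at least p + p′ − 1.) -/
lemma chain_bound (p : ℕ) (hp : 2 ≤ p) (a : ℝ) (ha : 0 ≤ a)
    (x y z : ℕ → ℝ)
    (hx : ∀ i ∈ Finset.Icc 1 p, 0 ≤ x i)
    (hzy1 : z 1 ≤ y 1) (hyx1 : y 1 ≤ x 1)
    (hlong : ∀ i, 2 ≤ i → i ≤ p - 1 →
      z i ≤ y i ∧ z i ≤ a + ∑ j ∈ Finset.Icc (i + 1) p, x j) :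
    2 * ∑ i ∈ Finset.Icc 1 (p - 1), z i ≤
      (p : ℝ) * x p + (∑ i ∈ Finset.Icc 1 (p - 1), ((i : ℝ) * x i + y i)) +
        ((p : ℝ) - 2) * a := by
  have hin : Finset.Icc 1 (p - 1) = insert 1 (Finset.Icc 2 (p - 1)) := by
    ext i; simp; omega
  have hnot : (1 : ℕ) ∉ Finset.Icc 2 (p - 1) := by simp
  -- split sums at 1
  have hz1 : ∑ i ∈ Finset.Icc 1 (p - 1), z i
      = z 1 + ∑ i ∈ Finset.Icc 2 (p - 1), z i := by
    rw [hin, Finset.sum_insert hnot]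
  have hxy1 : ∑ i ∈ Finset.Icc 1 (p - 1), ((i : ℝ) * x i + y i)
      = (1 * x 1 + y 1) + ∑ i ∈ Finset.Icc 2 (p - 1), ((i : ℝ) * x i + y i) := by
    rw [hin, Finset.sum_insert hnot]; norm_num
  -- bound middle z's
  have key2 : ∑ i ∈ Finset.Icc 2 (p - 1), (2 * z i)
      ≤ ∑ i ∈ Finset.Icc 2 (p - 1), (y i + (a + ∑ j ∈ Finset.Icc (i + 1) p, x j)) := by
    apply Finset.sum_le_sum
    intro i hi
    simp only [Finset.mem_Icc] at hi
    obtain ⟨h1, h2⟩ := hlong i hi.1 hi.2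
    linarith
  have hsplit2 : ∑ i ∈ Finset.Icc 2 (p - 1), (y i + (a + ∑ j ∈ Finset.Icc (i + 1) p, x j))
      = (∑ i ∈ Finset.Icc 2 (p - 1), y i) + ((p : ℝ) - 2) * a
        + ∑ i ∈ Finset.Icc 2 (p - 1), ∑ j ∈ Finset.Icc (i + 1) p, x j := by
    rw [Finset.sum_add_distrib, Finset.sum_add_distrib, Finset.sum_const, Nat.card_Icc]
    have : ((p - 1 + 1 - 2 : ℕ) : ℝ) = (p : ℝ) - 2 := by
      have : p - 1 + 1 - 2 = p - 2 := by omega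
      rw [this, Nat.cast_sub hp]; norm_num
    rw [nsmul_eq_mul, this]; ring
  -- swap double sum
  have hswap : ∑ i ∈ Finset.Icc 2 (p - 1), ∑ j ∈ Finset.Icc (i + 1) p, x j
      = ∑ j ∈ Finset.Icc 3 p, ∑ i ∈ Finset.Icc 2 (j - 1), x j := by
    apply Finset.sum_comm'
    intro i j; simp only [Finset.mem_Icc]; omega
  have hinner : ∑ j ∈ Finset.Icc 3 p, ∑ i ∈ Finset.Icc 2 (j - 1), x j
      = ∑ j ∈ Finset.Icc 3 p, ((j - 2 : ℕ) : ℝ) * x j := by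
    apply Finset.sum_congr rfl
    intro j hj
    simp only [Finset.mem_Icc] at hj
    rw [Finset.sum_const, Nat.card_Icc, nsmul_eq_mul]
    have h : j - 1 + 1 - 2 = j - 2 := by omega
    rw [h]
  have hbnd : ∑ j ∈ Finset.Icc 3 p, ((j - 2 : ℕ) : ℝ) * x j
      ≤ ∑ j ∈ Finset.Icc 3 p, (j : ℝ) * x j := by
    apply Finset.sum_le_sum
    intro j hj
    simp only [Finset.mem_Icc] at hj
    have hxj : 0 ≤ x j := hx j (by simp only [Finset.mem_Icc]; omega)
    apply mul_le_mul_of_nonneg_right _ hxj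
    exact_mod_cast Nat.sub_le j 2
  have hsub : 1 * x 1 + ∑ j ∈ Finset.Icc 3 p, (j : ℝ) * x j
      ≤ ∑ j ∈ Finset.Icc 1 p, (j : ℝ) * x j := by
    have h1n : (1 : ℕ) ∉ Finset.Icc 3 p := by simp
    have := Finset.sum_le_sum_of_subset_of_nonneg
      (s := insert 1 (Finset.Icc 3 p)) (t := Finset.Icc 1 p)
      (f := fun j : ℕ => (j : ℝ) * x j)
      (by intro j hj; simp only [Finset.mem_insert, Finset.mem_Icc] at hj ⊢; omega)
      (by intro j hj _; exact mul_nonneg (by positivity)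
            (hx j hj))
    rw [Finset.sum_insert h1n] at this
    simpa using this
  have hptop : ∑ j ∈ Finset.Icc 1 p, (j : ℝ) * x j
      = (p : ℝ) * x p + ∑ j ∈ Finset.Icc 1 (p - 1), (j : ℝ) * x j := by
    have hpn : p ∉ Finset.Icc 1 (p - 1) := by simp only [Finset.mem_Icc]; omega
    have : Finset.Icc 1 p = insert p (Finset.Icc 1 (p - 1)) := by ext i; simp; omega
    rw [this, Finset.sum_insert hpn]
  have hxyd : ∑ i ∈ Finset.Icc 1 (p - 1), ((i : ℝ) * x i + y i)
      = (∑ i ∈ Finset.Icc 1 (p - 1), (i : ℝ) * x i) + ∑ i ∈ Finset.Icc 1 (p - 1), y i := by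
    rw [Finset.sum_add_distrib]
  have hy1 : ∑ i ∈ Finset.Icc 1 (p - 1), y i
      = y 1 + ∑ i ∈ Finset.Icc 2 (p - 1), y i := by
    rw [hin, Finset.sum_insert hnot]
  have hmul : ∑ i ∈ Finset.Icc 2 (p - 1), (2 * z i)
      = 2 * ∑ i ∈ Finset.Icc 2 (p - 1), z i := by rw [Finset.mul_sum]
  linarith

lemma sum_split_aux (n : ℕ) (c : ℝ) (u v w : ℕ → ℝ) :
    ∑ i ∈ Finset.Icc 1 n, ((i : ℝ) * u i + c * v i + w i)
      = (∑ i ∈ Finset.Icc 1 n, ((i : ℝ) * u i + w i)) + c * ∑ i ∈ Finset.Icc 1 n, v i := by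
  rw [Finset.mul_sum, ← Finset.sum_add_distrib]
  apply Finset.sum_congr rfl
  intros; ring



/-- The inequality resolving two sibling long chains (a long
p-chain and a long p′-chain hanging at a common vertex at distance `a` from the
depot) by their two cascades: the left side is half the cost of the `p + p′`
cascade tours, and the right-hand bracket is half the reduction in the traffic
lower bound. -/
theorem sibling_long_pchains_cascade
    (p p' : ℕ) (hp : 2 ≤ p) (hp' : 2 ≤ p') (a : ℝ) (ha : 0 ≤ a)
    (x y z x' y' z' : ℕ → ℝ)
    (hx : ∀ i ∈ Finset.Icc 1 p, 0 ≤ x i)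
    (hy : ∀ i ∈ Finset.Icc 1 (p - 1), 0 ≤ y i)
    (hz : ∀ i ∈ Finset.Icc 1 (p - 1), 0 ≤ z i)
    (hx' : ∀ i ∈ Finset.Icc 1 p', 0 ≤ x' i)
    (hy' : ∀ i ∈ Finset.Icc 1 (p' - 1), 0 ≤ y' i)
    (hz' : ∀ i ∈ Finset.Icc 1 (p' - 1), 0 ≤ z' i)
    (hzy1 : z 1 ≤ y 1) (hyx1 : y 1 ≤ x 1)
    (hzy1' : z' 1 ≤ y' 1) (hyx1' : y' 1 ≤ x' 1)
    (hlong : ∀ i, 2 ≤ i → i ≤ p - 1 →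
      z i ≤ y i ∧ z i ≤ a + ∑ j ∈ Finset.Icc (i + 1) p, x j)
    (hlong' : ∀ i, 2 ≤ i → i ≤ p' - 1 →
      z' i ≤ y' i ∧ z' i ≤ a + ∑ j ∈ Finset.Icc (i + 1) p', x' j) :
    (p : ℝ) * x p + (∑ i ∈ Finset.Icc 1 (p - 1), ((i : ℝ) * x i + 2 * z i + y i)) +
        (p' : ℝ) * x' p' +
        (∑ i ∈ Finset.Icc 1 (p' - 1), ((i : ℝ) * x' i + 2 * z' i + y' i)) +
        ((p : ℝ) + (p' : ℝ)) * a ≤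
      4 / 3 *
        ((p : ℝ) * x p + (∑ i ∈ Finset.Icc 1 (p - 1), ((i : ℝ) * x i + z i + y i)) +
          (p' : ℝ) * x' p' +
          (∑ i ∈ Finset.Icc 1 (p' - 1), ((i : ℝ) * x' i + z' i + y' i)) +
          ((p : ℝ) + (p' : ℝ) - 1) * a) := by
  have c1 := chain_bound p hp a ha x y z hx hzy1 hyx1 hlong
  have c2 := chain_bound p' hp' a ha x' y' z' hx' hzy1' hyx1' hlong'
  have e1 := sum_split_aux (p - 1) 2 x z y
  have e2 : ∑ i ∈ Finset.Icc 1 (p - 1), ((i : ℝ) * x i + z i + y i)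
      = (∑ i ∈ Finset.Icc 1 (p - 1), ((i : ℝ) * x i + y i))
        + 1 * ∑ i ∈ Finset.Icc 1 (p - 1), z i := by
    have := sum_split_aux (p - 1) 1 x z y
    simpa using this
  have e1' := sum_split_aux (p' - 1) 2 x' z' y'
  have e2' : ∑ i ∈ Finset.Icc 1 (p' - 1), ((i : ℝ) * x' i + z' i + y' i)
      = (∑ i ∈ Finset.Icc 1 (p' - 1), ((i : ℝ) * x' i + y' i))
        + 1 * ∑ i ∈ Finset.Icc 1 (p' - 1), z' i := by
    have := sum_split_aux (p' - 1) 1 x' z' y'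
    simpa using this
  rw [e1, e2, e1', e2']
  linarith
end

section
/- Consider an instance of splittable Capacitated Vehicle Routing on a tree with capacity Q > 0, and let v be a leaf with demand d(v) ≥ Q. Let the modified instance be obtained by decreasing the demand at v by Q (all other data unchanged). Then LB of the modified instance equals LB of the original instance minus 2·l(P[r,v]), where l(P[r,v]) is the total length of the path from the depot r to v. Consequently, the single round-trip tour from r to v covering Q demand at v has cost exactly equal to the resulting reduction of the lower bound (it is a 1-approximate tour). -/
open scoped Classical

namespace TreeCVRP

variable {V : Type} [Fintype V]

/-- `l(P[r,v])`: the total length of the path from the depot to `v`, i.e. the sum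
of the lengths of the edges above the non-root ancestors of `v`. -/
noncomputable def pathLen (I : TreeCVRP V) (v : V) : ℝ :=
  ∑ w ∈ Finset.univ.filter (fun w => w ≠ I.root ∧ I.inSubtree w v), I.len w

/-- The modified instance obtained by decreasing the demand at `v` by `Q`,
all other data unchanged. -/
noncomputable def decreaseDemand (I : TreeCVRP V) (v : V) (hv : v ≠ I.root)
    (hd : I.cap ≤ I.demand v) : TreeCVRP V :=
  { I with
    demand := fun u => if u = v then I.demand v - I.cap else I.demand u
    demand_nonneg := by
      intro u
      by_cases h : u = v
      · simp [h, sub_nonneg.mpr hd]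
      · simp [h, I.demand_nonneg u]
    demand_root := by
      have h : I.root ≠ v := fun h => hv h.symm
      simp [h, I.demand_root] }

end TreeCVRP

namespace TreeCVRP

variable {V : Type} [Fintype V]

lemma decreaseDemand_subtreeDemand (I : TreeCVRP V) (v : V) (hv : v ≠ I.root)
    (hd : I.cap ≤ I.demand v) (w : V) :
    (I.decreaseDemand v hv hd).subtreeDemand w =
      I.subtreeDemand w - (if I.inSubtree w v then I.cap else 0) := by
  have hp : (I.decreaseDemand v hv hd).inSubtree = I.inSubtree := rfl
  have hsum : (I.decreaseDemand v hv hd).subtreeDemand w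
      = ∑ u ∈ Finset.univ.filter (fun u => I.inSubtree w u),
          (I.demand u - if u = v then I.cap else 0) := by
    rw [subtreeDemand, hp]
    refine Finset.sum_congr rfl fun u _ => ?_
    by_cases h : u = v <;> simp [decreaseDemand, h]
  rw [hsum, Finset.sum_sub_distrib, Finset.sum_ite_eq' _ v (fun _ => I.cap)]
  simp [subtreeDemand, Finset.mem_filter]

lemma decreaseDemand_lowerBound (I : TreeCVRP V) (v : V) (hv : v ≠ I.root)
    (hd : I.cap ≤ I.demand v) :
    (I.decreaseDemand v hv hd).lowerBound = I.lowerBound - 2 * I.pathLen v := by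
  have hQ : I.cap ≠ 0 := ne_of_gt I.cap_pos
  have key : ∀ w : V,
      2 * I.len w * (⌈(I.decreaseDemand v hv hd).subtreeDemand w / I.cap⌉ : ℝ)
      = 2 * I.len w * (⌈I.subtreeDemand w / I.cap⌉ : ℝ)
        - (if I.inSubtree w v then 2 * I.len w else 0) := by
    intro w
    rw [decreaseDemand_subtreeDemand]
    by_cases h : I.inSubtree w v
    · simp only [h, if_true]
      rw [sub_div, div_self hQ, Int.ceil_sub_one]
      push_cast
      ring
    · simp [h]
  have hroot : (I.decreaseDemand v hv hd).root = I.root := rfl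
  have hlen : (I.decreaseDemand v hv hd).len = I.len := rfl
  have hcap : (I.decreaseDemand v hv hd).cap = I.cap := rfl
  calc (I.decreaseDemand v hv hd).lowerBound
      = ∑ w ∈ Finset.univ.filter (fun w => w ≠ I.root),
          (2 * I.len w * (⌈I.subtreeDemand w / I.cap⌉ : ℝ)
            - (if I.inSubtree w v then 2 * I.len w else 0)) := by
        rw [lowerBound, hroot]
        refine Finset.sum_congr rfl fun w _ => ?_
        rw [hlen, hcap, key w]
    _ = I.lowerBound - 2 * I.pathLen v := by
        rw [Finset.sum_sub_distrib]
        congr 1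
        rw [← Finset.sum_filter, Finset.filter_filter, pathLen, Finset.mul_sum]

end TreeCVRP

/-- If `v` is a leaf with demand at least `Q`, then decreasing
the demand at `v` by `Q` decreases the traffic lower bound `LB` by exactly
`2·l(P[r,v])`.  Consequently, the single round-trip tour from the depot to `v`
covering `Q` demand at `v` (which crosses exactly the edges on `P[r,v]`, twice
each) has cost exactly the resulting reduction of the lower bound: it is a
1-approximate tour. -/
theorem cvrp_tree_leaf_roundtrip_one_approximate
    {V : Type} [Fintype V] (I : TreeCVRP V) (v : V)
    (hv : v ≠ I.root) (hleaf : ∀ u, I.parent u ≠ v)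
    (hd : I.cap ≤ I.demand v) :
    (I.decreaseDemand v hv hd).lowerBound = I.lowerBound - 2 * I.pathLen v ∧
      ∃ t : I.Tour,
        (∀ u, t.crossings u = if u ≠ I.root ∧ I.inSubtree u v then 2 else 0) ∧
        t.cover = (fun u => if u = v then I.cap else 0) ∧
        t.cost = I.lowerBound - (I.decreaseDemand v hv hd).lowerBound := by
  have h1 := I.decreaseDemand_lowerBound v hv hd
  refine ⟨h1, ?_⟩
  refine ⟨{ crossings := fun u => if u ≠ I.root ∧ I.inSubtree u v then 2 else 0
            crossings_root := by simp
            crossings_even := by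
              intro u; by_cases h : u ≠ I.root ∧ I.inSubtree u v <;> simp [h]
            crossings_connected := ?_
            cover := fun u => if u = v then I.cap else 0
            cover_nonneg := by
              intro u; by_cases h : u = v <;> simp [h, le_of_lt I.cap_pos]
            cover_visited := ?_
            cover_le_cap := by
              rw [Finset.sum_ite_eq' Finset.univ v (fun _ => I.cap)]
              simp }, fun u => rfl, rfl, ?_⟩
  · intro u hu
    by_cases h : u ≠ I.root ∧ I.inSubtree u v
    · obtain ⟨hne, n, hn⟩ := h
      by_cases hr : I.parent u = I.root
      · exact Or.inl hr
      · refine Or.inr ?_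
        have hsub : I.inSubtree (I.parent u) v :=
          ⟨n + 1, by rw [Function.iterate_succ_apply', hn]⟩
        simp [hr, hsub]
    · simp [h] at hu
  · intro u hu
    by_cases h : u = v
    · subst h
      refine Or.inr ?_
      have hsub : I.inSubtree u u := ⟨0, rfl⟩
      simp [hv, hsub]
    · simp [h] at hu
  · rw [h1, TreeCVRP.Tour.cost]
    have : ∀ u : V, ((if u ≠ I.root ∧ I.inSubtree u v then (2:ℕ) else 0 : ℕ) : ℝ) * I.len u
        = if u ≠ I.root ∧ I.inSubtree u v then 2 * I.len u else 0 := by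
      intro u; by_cases h : u ≠ I.root ∧ I.inSubtree u v <;> simp [h]
    rw [Finset.sum_congr rfl (fun u _ => this u), ← Finset.sum_filter,
      TreeCVRP.pathLen, Finset.mul_sum]
    ring
end
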